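/- (Theorem 2, conditional form.) Let T_opt be a multicast tree spanning M that minimizes Ψ among all multicast trees spanning M, let T_I be a multicast tree spanning M that minimizes |in(·)| among all multicast trees spanning M, and let T be a multicast tree spanning M with lv(T) ⊆ M and |in(T)| ≤ 12·|in(T_I)|. Then Ψ(T) ≤ 13·Ψ(T_opt). -/

import Mathlib

namespace MEGCOM

/-- The set of internal nodes (degree at least 2) of a subgraph `T`. -/
def inn {V : Type*} {G : SimpleGraph V} (T : G.Subgraph) : Set V :=
  {v | v ∈ T.verts ∧ 2 ≤ (T.neighborSet v).ncard}

/-- The set of degree-one nodes of a subgraph `T`. -/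
def lv {V : Type*} {G : SimpleGraph V} (T : G.Subgraph) : Set V :=
  {v | v ∈ T.verts ∧ (T.neighborSet v).ncard = 1}

/-- `T` is a multicast tree spanning the member set `M`. -/
def IsMulticastTree {V : Type*} (G : SimpleGraph V) (M : Finset V) (T : G.Subgraph) : Prop :=
  T.coe.IsTree ∧ ↑M ⊆ T.verts

/-- Total energy `Ψ(T)` of a group communication session using `T` (fixed tx power). -/
noncomputable def psi {V : Type*} [Fintype V] {G : SimpleGraph V} (T : G.Subgraph)
    (M : Finset V) (p : V → ℕ) (εs εr : ℝ) : ℝ :=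
  (∑ u ∈ M, (p u : ℝ)) * ((inn T).ncard : ℝ) * εs
    + (∑ᶠ u ∈ lv T, (p u : ℝ)) * εs
    + (∑ u ∈ M, (p u : ℝ)) * ((T.verts.ncard : ℝ) - 1) * εr

section Aux
variable {V : Type*} [Fintype V] {G : SimpleGraph V}


/-- In a connected subgraph with at least two vertices, every vertex has a neighbor. -/
lemma deg_pos (S : G.Subgraph) (hS : S.coe.Connected) (h2 : 2 ≤ S.verts.ncard)
    {v : V} (hv : v ∈ S.verts) : 1 ≤ (S.neighborSet v).ncard := by
  obtain ⟨w, hw, hwv⟩ := Set.exists_ne_of_one_lt_ncard (s := S.verts) (by omega) v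
  obtain ⟨p⟩ := hS.preconnected ⟨v, hv⟩ ⟨w, hw⟩
  have hne : (⟨v, hv⟩ : S.verts) ≠ ⟨w, hw⟩ := by
    intro h; exact hwv (congrArg Subtype.val h).symm
  have hnil : ¬ p.Nil := SimpleGraph.Walk.not_nil_of_ne hne
  have hadj := p.adj_snd hnil
  have : ((p.getVert 1 : S.verts) : V) ∈ S.neighborSet v := by
    exact (SimpleGraph.Subgraph.coe_adj _ _ _).mp hadj
  exact (Set.ncard_pos (Set.toFinite _)).mpr ⟨_, this⟩

lemma verts_eq_union (S : G.Subgraph) (hS : S.coe.Connected) (h2 : 2 ≤ S.verts.ncard) :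
    S.verts = inn S ∪ lv S := by
  apply Set.Subset.antisymm
  · intro v hv
    have := deg_pos S hS h2 hv
    rcases Nat.lt_or_ge (S.neighborSet v).ncard 2 with h | h
    · exact Or.inr ⟨hv, by omega⟩
    · exact Or.inl ⟨hv, h⟩
  · rintro v (⟨hv, _⟩ | ⟨hv, _⟩) <;> exact hv

lemma inn_lv_disjoint (S : G.Subgraph) : Disjoint (inn S) (lv S) := by
  rw [Set.disjoint_left]
  rintro v ⟨_, h2⟩ ⟨_, h1⟩
  omega

/-- The key counting lemma for trees with at least two vertices. -/
lemma tree_count (S : G.Subgraph) (hS : S.coe.IsTree) (h2 : 2 ≤ S.verts.ncard) :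
    (inn S).ncard + (lv S).ncard = S.verts.ncard ∧ 2 ≤ (lv S).ncard := by
  classical
  letI : Fintype ↥S.verts := (S.verts.toFinite).fintype
  letI : DecidableRel S.coe.Adj := Classical.decRel _
  have hedges := hS.card_edgeFinset
  have hdegsum := SimpleGraph.sum_degrees_eq_twice_card_edges S.coe
  have hcard : Fintype.card ↥S.verts = S.verts.ncard := by
    rw [← Nat.card_coe_set_eq, Nat.card_eq_fintype_card]
  have hdeg2 : ∀ (v : ↥S.verts) (i : Fintype (S.coe.neighborSet v)),
      @SimpleGraph.degree _ S.coe v i = (S.neighborSet ↑v).ncard := by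
    intro v i
    calc @SimpleGraph.degree _ S.coe v i
        = Fintype.card (S.coe.neighborSet v) :=
          (@SimpleGraph.card_neighborSet_eq_degree _ S.coe v i).symm
      _ = Nat.card (S.coe.neighborSet v) := (Nat.card_eq_fintype_card).symm
      _ = Nat.card (S.neighborSet ↑v) :=
          Nat.card_congr (SimpleGraph.Subgraph.coeNeighborSetEquiv v)
      _ = (S.neighborSet ↑v).ncard := Nat.card_coe_set_eq _
  -- rewrite degree sum as sum over verts.toFinset of ncards
  have hsum : ∑ v ∈ S.verts.toFinset, (S.neighborSet v).ncard
      = 2 * (S.verts.ncard - 1) := by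
    have h := hdegsum
    simp only [hdeg2] at h
    rw [Finset.sum_subtype S.verts.toFinset (fun x => Set.mem_toFinset)]
    rw [h]
    omega
  have hunion := verts_eq_union S hS.isConnected h2
  have hdisj := inn_lv_disjoint S
  letI : Fintype ↥(inn S) := (Set.toFinite _).fintype
  letI : Fintype ↥(lv S) := (Set.toFinite _).fintype
  have hfin : S.verts.toFinset = (inn S).toFinset ∪ (lv S).toFinset := by
    ext x; simp only [Set.mem_toFinset, Finset.mem_union, hunion, Set.mem_union]
  have hdisjf : Disjoint ((inn S).toFinset) ((lv S).toFinset) := by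
    simpa [Set.disjoint_toFinset] using hdisj
  have hsplit : ∑ v ∈ S.verts.toFinset, (S.neighborSet v).ncard
      = ∑ v ∈ (inn S).toFinset, (S.neighborSet v).ncard
        + ∑ v ∈ (lv S).toFinset, (S.neighborSet v).ncard := by
    rw [hfin, Finset.sum_union hdisjf]
  have hinlb : 2 * (inn S).toFinset.card ≤ ∑ v ∈ (inn S).toFinset, (S.neighborSet v).ncard := by
    calc 2 * (inn S).toFinset.card = ∑ _v ∈ (inn S).toFinset, 2 := by
          rw [Finset.sum_const, smul_eq_mul, mul_comm]
      _ ≤ _ := Finset.sum_le_sum fun v hv => (Set.mem_toFinset.mp hv).2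
  have hlveq : ∑ v ∈ (lv S).toFinset, (S.neighborSet v).ncard = (lv S).toFinset.card := by
    rw [Finset.sum_congr rfl fun v hv => (Set.mem_toFinset.mp hv).2, Finset.sum_const,
      smul_eq_mul, mul_one]
  have hcards : (inn S).toFinset.card + (lv S).toFinset.card = S.verts.toFinset.card := by
    rw [hfin, Finset.card_union_of_disjoint hdisjf]
  have h1 : (inn S).ncard = (inn S).toFinset.card := Set.ncard_eq_toFinset_card' _
  have h2' : (lv S).ncard = (lv S).toFinset.card := Set.ncard_eq_toFinset_card' _
  have h3 : S.verts.ncard = S.verts.toFinset.card := Set.ncard_eq_toFinset_card' _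
  constructor <;> omega

/-- A one-vertex tree subgraph has no internal and no degree-one nodes. -/
lemma single_vertex (S : G.Subgraph) (h1 : S.verts.ncard = 1) :
    inn S = ∅ ∧ lv S = ∅ := by
  obtain ⟨a, ha⟩ := Set.ncard_eq_one.mp h1
  have key : ∀ v, v ∈ S.verts → (S.neighborSet v).ncard = 0 := by
    intro v hv
    rw [Set.ncard_eq_zero (Set.toFinite _)]
    by_contra h
    obtain ⟨u, hu⟩ := Set.nonempty_iff_ne_empty.mpr h
    have huv : u ≠ v := fun h' => (S.adj_sub hu).ne (h' ▸ rfl)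
    have huV : u ∈ S.verts := S.edge_vert (S.adj_symm hu)
    rw [ha] at hv huV
    exact huv (hv ▸ huV ▸ rfl)
  constructor <;> · ext v; simp only [inn, lv, Set.mem_setOf_eq, Set.mem_empty_iff_false,
      iff_false, not_and]
                    intro hv
                    have := key v hv
                    omega


end Aux

/-- Theorem 2, conditional form. -/
theorem stmt5 {V : Type*} [Fintype V] {G : SimpleGraph V} (M : Finset V)
    (p : V → ℕ) (hp : ∀ u ∉ M, p u = 0) (εs εr : ℝ)
    (hεs : 0 < εs) (hεr : 0 < εr) (hrs : εr ≤ εs)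
    (Topt TI T : G.Subgraph)
    (hTopt : IsMulticastTree G M Topt)
    (hopt : ∀ S : G.Subgraph, IsMulticastTree G M S →
      psi Topt M p εs εr ≤ psi S M p εs εr)
    (hTI : IsMulticastTree G M TI)
    (hImin : ∀ S : G.Subgraph, IsMulticastTree G M S →
      (inn TI).ncard ≤ (inn S).ncard)
    (hT : IsMulticastTree G M T) (hlv : lv T ⊆ ↑M)
    (hin : (inn T).ncard ≤ 12 * (inn TI).ncard) :
    psi T M p εs εr ≤ 13 * psi Topt M p εs εr := by
  classical
  obtain ⟨htO, hMO⟩ := hTopt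
  obtain ⟨htT, hMT⟩ := hT
  set k : ℕ := ∑ u ∈ M, p u with hk
  rcases Nat.eq_zero_or_pos k with hk0 | hkpos
  · -- all packet counts are zero
    have hall : ∀ u, p u = 0 := by
      intro u
      by_cases hu : u ∈ M
      · have hs : ∑ u ∈ M, p u = 0 := by rw [← hk]; exact hk0
        exact Finset.sum_eq_zero_iff.mp hs u hu
      · exact hp u hu
    simp [psi, hall]
  · -- k ≥ 1
    have hMne : M.Nonempty := by
      rcases M.eq_empty_or_nonempty with h | h
      · exfalso; rw [hk, h, Finset.sum_empty] at hkpos; omega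
      · exact h
    have hnO1 : 1 ≤ Topt.verts.ncard :=
      (Set.ncard_pos (Set.toFinite _)).mpr (Set.nonempty_coe_sort.mp htO.isConnected.nonempty)
    have hnT1 : 1 ≤ T.verts.ncard :=
      (Set.ncard_pos (Set.toFinite _)).mpr (Set.nonempty_coe_sort.mp htT.isConnected.nonempty)
    rcases Nat.lt_or_ge Topt.verts.ncard 2 with h1 | h2
    · -- Topt is a single vertex
      have h1' : Topt.verts.ncard = 1 := by omega
      obtain ⟨hinnO, hlvO⟩ := single_vertex Topt h1'
      have hT1 : T.verts.ncard = 1 := by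
        by_contra h
        have h2T : 2 ≤ T.verts.ncard := by omega
        obtain ⟨_, hlv2⟩ := tree_count T htT h2T
        have hsub : lv T ⊆ Topt.verts := fun x hx => hMO (hlv hx)
        have := Set.ncard_le_ncard hsub (Set.toFinite _)
        omega
      obtain ⟨hinnT, hlvT⟩ := single_vertex T hT1
      simp [psi, hinnO, hlvO, hinnT, hlvT, h1', hT1, finsum_mem_empty]
    · -- main case
      obtain ⟨hcountO, hlv2O⟩ := tree_count Topt htO h2
      set iT := (inn T).ncard
      set iS := (inn Topt).ncard
      set nT := T.verts.ncard
      set nS := Topt.verts.ncard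
      set ftT := (Set.toFinite (lv T)).toFinset with hftT
      set ftO := (Set.toFinite (lv Topt)).toFinset with hftO
      set bt : ℕ := ∑ u ∈ ftT, p u with hbt
      set bs : ℕ := ∑ u ∈ ftO, p u with hbs
      have f1 : iT ≤ 12 * iS := hin.trans (Nat.mul_le_mul_left _ (hImin Topt ⟨htO, hMO⟩))
      have f2 : nT ≤ iT + M.card := by
        rcases Nat.lt_or_ge nT 2 with h | h
        · have : 1 ≤ M.card := Finset.card_pos.mpr hMne
          omega
        · obtain ⟨hcT, _⟩ := tree_count T htT h
          have hlT : (lv T).ncard ≤ M.card := by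
            have := Set.ncard_le_ncard hlv (Set.toFinite _)
            rwa [Set.ncard_coe_finset] at this
          omega
      have f3 : M.card ≤ nS := by
        have := Set.ncard_le_ncard hMO (Set.toFinite _)
        rwa [Set.ncard_coe_finset] at this
      have f4 : iS + 2 ≤ nS := by omega
      have f2' : bt ≤ k := by
        apply Finset.sum_le_sum_of_subset
        intro u hu
        exact hlv ((Set.Finite.mem_toFinset _).mp hu)
      have f5 : k ≤ k * iS + bs := by
        have hunion := verts_eq_union Topt htO.isConnected h2
        have hsplit := Finset.sum_filter_add_sum_filter_not M (· ∈ inn Topt) p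
        have hIn : ∑ u ∈ M.filter (· ∈ inn Topt), p u ≤ k * iS := by
          rcases (M.filter (· ∈ inn Topt)).eq_empty_or_nonempty with he | ⟨u, hu⟩
          · rw [he, Finset.sum_empty]; exact Nat.zero_le _
          · have hiS : 1 ≤ iS := (Set.ncard_pos (Set.toFinite _)).mpr
              ⟨u, (Finset.mem_filter.mp hu).2⟩
            have : ∑ u ∈ M.filter (· ∈ inn Topt), p u ≤ k :=
              Finset.sum_le_sum_of_subset (Finset.filter_subset _ _)
            calc ∑ u ∈ M.filter (· ∈ inn Topt), p u ≤ k := this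
              _ = k * 1 := (mul_one k).symm
              _ ≤ k * iS := Nat.mul_le_mul_left k hiS
        have hOut : ∑ u ∈ M.filter (fun u => ¬ u ∈ inn Topt), p u ≤ bs := by
          apply Finset.sum_le_sum_of_subset
          intro u hu
          rw [Finset.mem_filter] at hu
          rw [hftO, Set.Finite.mem_toFinset]
          have huV : u ∈ Topt.verts := hMO hu.1
          rw [hunion] at huV
          rcases huV with h | h
          · exact absurd h hu.2
          · exact h
        omega
      -- now pass to the reals
      have hKsum : ∑ u ∈ M, (p u : ℝ) = (k : ℝ) := by rw [hk]; push_cast; rfl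
      have hBT : (∑ᶠ u ∈ lv T, (p u : ℝ)) = (bt : ℝ) := by
        rw [finsum_mem_eq_finite_toFinset_sum _ (Set.toFinite (lv T)), hbt]
        push_cast; rfl
      have hBS : (∑ᶠ u ∈ lv Topt, (p u : ℝ)) = (bs : ℝ) := by
        rw [finsum_mem_eq_finite_toFinset_sum _ (Set.toFinite (lv Topt)), hbs]
        push_cast; rfl
      rw [psi, psi, hKsum, hBT, hBS]
      have hK0 : (0:ℝ) ≤ (k:ℝ) := Nat.cast_nonneg k
      have c1 : (iT:ℝ) ≤ 12 * (iS:ℝ) := by exact_mod_cast f1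
      have c2 : (bt:ℝ) ≤ (k:ℝ) := by exact_mod_cast f2'
      have c3 : (nT:ℝ) ≤ (iT:ℝ) + (M.card:ℝ) := by exact_mod_cast f2
      have c4 : (M.card:ℝ) ≤ (nS:ℝ) := by exact_mod_cast f3
      have c5 : (iS:ℝ) + 2 ≤ (nS:ℝ) := by exact_mod_cast f4
      have c6 : (k:ℝ) ≤ (k:ℝ) * (iS:ℝ) + (bs:ℝ) := by exact_mod_cast f5
      have hA : (k:ℝ) * (iT:ℝ) * εs ≤ 12 * ((k:ℝ) * (iS:ℝ) * εs) := by
        have := mul_le_mul_of_nonneg_right (mul_le_mul_of_nonneg_left c1 hK0) hεs.le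
        linarith
      have hB : (bt:ℝ) * εs ≤ ((k:ℝ) * (iS:ℝ) + (bs:ℝ)) * εs :=
        mul_le_mul_of_nonneg_right (c2.trans c6) hεs.le
      have hn : (nT:ℝ) - 1 ≤ 13 * ((nS:ℝ) - 1) := by linarith
      have hD : (k:ℝ) * ((nT:ℝ) - 1) * εr ≤ 13 * ((k:ℝ) * ((nS:ℝ) - 1) * εr) := by
        have := mul_le_mul_of_nonneg_right (mul_le_mul_of_nonneg_left hn hK0) hεr.le
        linarith
      have hE : (0:ℝ) ≤ (bs:ℝ) * εs := mul_nonneg (Nat.cast_nonneg _) hεs.le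
      linarith [hA, hB, hD, hE]


end MEGCOM
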